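/- Let h : ℝ^d → ℝ be differentiable, μ-strongly convex (⟨∇h(θ₁) − ∇h(θ₂), θ₁ − θ₂⟩ ≥ μ‖θ₁ − θ₂‖²) with minimizer θ* satisfying ∇h(θ*) = 0. Suppose F : ℝ^d × ℝ^r → ℝ^d satisfies F(θ, ω*(θ)) = ∇h(θ), is L-Lipschitz jointly in (θ, ω), and ω* : ℝ^d → ℝ^r is L-Lipschitz. Then for any θ, ω and any α with 0 < α ≤ min{μ/(6(L+1)⁴), 1/(2μ)}, writing z = ‖θ − θ*‖² and y = ‖ω − ω*(θ)‖², we have ‖θ − θ* − α·F(θ, ω)‖² ≤ (1 − μα/2)·z + (2L²α/μ)·y. -/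

import Mathlib

open scoped RealInnerProductSpace

set_option maxHeartbeats 1000000


private lemma drift_aux (μ α L N B W I1 I2 Gn : ℝ) (hμ : 0 < μ) (hα0 : 0 < α)
    (hL : 1 ≤ L) (hN0 : 0 ≤ N) (hB0 : 0 ≤ B) (hW0 : 0 ≤ W) (hGn0 : 0 ≤ Gn)
    (hbW : B ≤ L * W) (hGle : Gn ≤ L * (L + 1) * N + B)
    (hI1 : μ * N ^ 2 ≤ I1) (hI2 : -(B * N) ≤ I2)
    (hα1 : α ≤ μ / (6 * (L + 1) ^ 4)) (hα2 : α ≤ 1 / (2 * μ)) :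
    N ^ 2 - 2 * (α * (I1 + I2)) + α ^ 2 * Gn ^ 2
      ≤ (1 - μ * α / 2) * N ^ 2 + (2 * L ^ 2 * α / μ) * W ^ 2 := by
  have hL0 : (0:ℝ) < L := by linarith
  have h6 : (0:ℝ) < 6 * (L + 1) ^ 4 := by positivity
  have hα1' : α * (6 * (L + 1) ^ 4) ≤ μ := (le_div_iff₀ h6).mp hα1
  have hα2' : α * (2 * μ) ≤ 1 := (le_div_iff₀ (by linarith : (0:ℝ) < 2 * μ)).mp hα2
  -- key scalar consequences
  have hc1 : 2 * α ^ 2 * (L * (L + 1)) ^ 2 ≤ α * μ / 3 := by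
    have hLL : (L * (L + 1)) ^ 2 ≤ (L + 1) ^ 4 := by nlinarith [sq_nonneg (L + 1)]
    calc 2 * α ^ 2 * (L * (L + 1)) ^ 2 ≤ 2 * α ^ 2 * (L + 1) ^ 4 :=
          mul_le_mul_of_nonneg_left hLL (by positivity)
      _ = (2 * α / 6) * (α * (6 * (L + 1) ^ 4)) := by ring
      _ ≤ (2 * α / 6) * μ := mul_le_mul_of_nonneg_left hα1' (by positivity)
      _ = α * μ / 3 := by ring
  have hc2 : 2 * α ^ 2 * μ ≤ α := by nlinarith
  have hGsq : Gn ^ 2 ≤ 2 * (L * (L + 1)) ^ 2 * N ^ 2 + 2 * B ^ 2 := by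
    nlinarith [sq_nonneg (L * (L + 1) * N - B),
      mul_nonneg (mul_nonneg (by positivity : (0:ℝ) ≤ L * (L + 1)) hN0) hB0]
  have hYoung : 2 * α * μ * (B * N) ≤ α * μ ^ 2 * N ^ 2 + α * B ^ 2 := by
    nlinarith [sq_nonneg (μ * N - B), hα0.le]
  -- multiply goal by μ
  rw [← mul_le_mul_iff_right₀ hμ]
  have hrhs : μ * ((1 - μ * α / 2) * N ^ 2 + 2 * L ^ 2 * α / μ * W ^ 2)
      = μ * (1 - μ * α / 2) * N ^ 2 + 2 * L ^ 2 * α * W ^ 2 := by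
    field_simp
  rw [hrhs]
  have f1 : 2 * α * μ * (μ * N ^ 2) ≤ 2 * α * μ * I1 :=
    mul_le_mul_of_nonneg_left hI1 (by positivity)
  have f2 : 2 * α * μ * (-(B * N)) ≤ 2 * α * μ * I2 :=
    mul_le_mul_of_nonneg_left hI2 (by positivity)
  have f4 : μ * α ^ 2 * Gn ^ 2 ≤ μ * α ^ 2 * (2 * (L * (L + 1)) ^ 2 * N ^ 2 + 2 * B ^ 2) :=
    mul_le_mul_of_nonneg_left hGsq (by positivity)
  have f5 : μ * α ^ 2 * (2 * (L * (L + 1)) ^ 2 * N ^ 2) ≤ μ * (α * μ / 3) * N ^ 2 := by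
    have := mul_le_mul_of_nonneg_right hc1 (mul_nonneg hμ.le (sq_nonneg N))
    nlinarith [this]
  have f6 : μ * α ^ 2 * (2 * B ^ 2) ≤ α * B ^ 2 := by
    have := mul_le_mul_of_nonneg_right hc2 (sq_nonneg B)
    nlinarith [this]
  have f7 : 2 * α * B ^ 2 ≤ 2 * α * (L ^ 2 * W ^ 2) := by
    have hB2 : B ^ 2 ≤ L ^ 2 * W ^ 2 := by nlinarith
    exact mul_le_mul_of_nonneg_left hB2 (by positivity)
  have f8 : 0 ≤ α * μ ^ 2 * N ^ 2 := by positivity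
  nlinarith [f1, f2, f4, f5, f6, f7, f8, hYoung]

theorem stmt_9 (d r : ℕ) (h : EuclideanSpace ℝ (Fin d) → ℝ) (L μ α : ℝ)
    (F : EuclideanSpace ℝ (Fin d) → EuclideanSpace ℝ (Fin r) → EuclideanSpace ℝ (Fin d))
    (ωstar : EuclideanSpace ℝ (Fin d) → EuclideanSpace ℝ (Fin r))
    (θstar : EuclideanSpace ℝ (Fin d))
    (hdiff : Differentiable ℝ h) (hμ : 0 < μ) (hL : 1 ≤ L)
    (hsc : ∀ θ₁ θ₂, μ * ‖θ₁ - θ₂‖ ^ 2 ≤ ⟪gradient h θ₁ - gradient h θ₂, θ₁ - θ₂⟫)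
    (hgradstar : gradient h θstar = 0)
    (hF : ∀ θ, F θ (ωstar θ) = gradient h θ)
    (hLipF : ∀ θ₁ θ₂ ω₁ ω₂, ‖F θ₁ ω₁ - F θ₂ ω₂‖ ≤ L * (‖θ₁ - θ₂‖ + ‖ω₁ - ω₂‖))
    (hLipω : ∀ θ₁ θ₂, ‖ωstar θ₁ - ωstar θ₂‖ ≤ L * ‖θ₁ - θ₂‖)
    (hα0 : 0 < α) (hα1 : α ≤ μ / (6 * (L + 1) ^ 4)) (hα2 : α ≤ 1 / (2 * μ)) :
    ∀ (θ : EuclideanSpace ℝ (Fin d)) (ω : EuclideanSpace ℝ (Fin r)),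
      ‖θ - θstar - α • F θ ω‖ ^ 2
        ≤ (1 - μ * α / 2) * ‖θ - θstar‖ ^ 2 + (2 * L ^ 2 * α / μ) * ‖ω - ωstar θ‖ ^ 2 := by
  intro θ ω
  set x := θ - θstar with hx
  set G := F θ ω with hG
  set b := G - gradient h θ with hbdef
  have hGdecomp : G = gradient h θ + b := by rw [hbdef]; abel
  -- norms
  set N := ‖x‖ with hN
  set W := ‖ω - ωstar θ‖ with hW
  set B := ‖b‖ with hB
  have hN0 : 0 ≤ N := norm_nonneg _
  have hW0 : 0 ≤ W := norm_nonneg _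
  have hB0 : 0 ≤ B := norm_nonneg _
  -- bias bound
  have hbW : B ≤ L * W := by
    have := hLipF θ θ ω (ωstar θ)
    rw [hF θ] at this
    simpa [hB, hbdef, hG, hW] using this
  -- gradient norm bound
  have hgrad : ‖gradient h θ‖ ≤ L * (L + 1) * N := by
    have h1 : ‖F θ (ωstar θ) - F θstar (ωstar θstar)‖
        ≤ L * (‖θ - θstar‖ + ‖ωstar θ - ωstar θstar‖) := hLipF θ θstar (ωstar θ) (ωstar θstar)
    rw [hF θ, hF θstar, hgradstar, sub_zero] at h1
    have h2 : ‖ωstar θ - ωstar θstar‖ ≤ L * ‖θ - θstar‖ := hLipω θ θstar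
    calc ‖gradient h θ‖ ≤ L * (‖θ - θstar‖ + ‖ωstar θ - ωstar θstar‖) := h1
      _ ≤ L * (‖θ - θstar‖ + L * ‖θ - θstar‖) := by
          have hL0 : (0:ℝ) ≤ L := by linarith
          nlinarith
      _ = L * (L + 1) * N := by rw [hN, hx]; ring
  -- G norm bound
  have hGn : ‖G‖ ≤ L * (L + 1) * N + B := by
    calc ‖G‖ = ‖gradient h θ + b‖ := by rw [← hGdecomp]
      _ ≤ ‖gradient h θ‖ + B := norm_add_le _ _
      _ ≤ L * (L + 1) * N + B := by linarith
  -- strong convexity inner product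
  have hI1 : μ * N ^ 2 ≤ ⟪x, gradient h θ⟫ := by
    have := hsc θ θstar
    rw [hgradstar, sub_zero] at this
    rw [real_inner_comm]
    simpa [hN, hx] using this
  -- cross term
  have hI2 : -(B * N) ≤ ⟪x, b⟫ := by
    have h1 : |⟪x, b⟫| ≤ N * B := by
      simpa [hN, hB] using abs_real_inner_le_norm x b
    have := neg_abs_le ⟪x, b⟫
    nlinarith [abs_nonneg ⟪x, b⟫]
  -- expansion
  have hexp : ‖x - α • G‖ ^ 2 = N ^ 2 - 2 * (α * ⟪x, G⟫) + α ^ 2 * ‖G‖ ^ 2 := by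
    rw [norm_sub_sq_real, real_inner_smul_right, norm_smul]
    rw [Real.norm_eq_abs, abs_of_pos hα0]
    ring
  have hIG : ⟪x, G⟫ = ⟪x, gradient h θ⟫ + ⟪x, b⟫ := by
    rw [hGdecomp, inner_add_right]
  have := drift_aux μ α L N B W ⟪x, gradient h θ⟫ ⟪x, b⟫ ‖G‖ hμ hα0 hL hN0 hB0 hW0
    (norm_nonneg _) hbW hGn hI1 hI2 hα1 hα2
  rw [hexp, hIG]
  exact this
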